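/- Let n ≥ 2, let c_1, …, c_n ∈ [0,1), let M ≥ 0, let i' ∈ {1,…,n} be such that c_{i'} = max{c_1,…,c_n}, and let i'' ∈ {1,…,n}\{i'} be such that c_{i''} = max{c_i : i ∈ {1,…,n}\{i'}}. Then the values ρ_{i'} = M·c_{i'}·(1 + c_{i''})/(1 − c_{i'}·c_{i''}) and ρ_i = M·c_i·(1 + c_{i'})/(1 − c_{i'}·c_{i''}) for i ∈ {1,…,n}\{i'} satisfy the system of n equations ρ_i = c_i·(M + max_{j∈{1,…,n}\{i}} ρ_j) for every i ∈ {1,…,n}. -/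
import Mathlib


/-- For `n ≥ 2`, `c_1, …, c_n ∈ [0,1)`, `M ≥ 0`, `i'` maximizing `c` and
`i'' ≠ i'` maximizing `c` over the remaining indices, the values
`ρ_{i'} = M c_{i'} (1 + c_{i''}) / (1 − c_{i'} c_{i''})` and
`ρ_i = M c_i (1 + c_{i'}) / (1 − c_{i'} c_{i''})` for `i ≠ i'`
satisfy the system `ρ_i = c_i (M + max_{j ≠ i} ρ_j)` for every `i`. -/
theorem rho_solves_system
    {n : ℕ} (hn : 2 ≤ n) (c : Fin n → ℝ)
    (hc0 : ∀ i, 0 ≤ c i) (hc1 : ∀ i, c i < 1)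
    (M : ℝ) (hM : 0 ≤ M)
    (i' i'' : Fin n) (hne : i'' ≠ i')
    (hi' : ∀ i, c i ≤ c i') (hi'' : ∀ i, i ≠ i' → c i ≤ c i'')
    (ρ : Fin n → ℝ)
    (hρ : ∀ i, ρ i = if i = i'
        then M * c i' * (1 + c i'') / (1 - c i' * c i'')
        else M * c i * (1 + c i') / (1 - c i' * c i'')) :
    ∀ i : Fin n, ρ i = c i * (M + (Finset.univ.erase i).sup'
      (Finset.card_pos.mp (by
        rw [Finset.card_erase_of_mem (Finset.mem_univ i), Finset.card_univ,
          Fintype.card_fin]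
        omega)) ρ) := by
  have hD : 0 < 1 - c i' * c i'' := by nlinarith [hc0 i', hc0 i'', hc1 i', hc1 i'']
  have hmax : ∀ j, ρ j ≤ ρ i' := by
    intro j
    rw [hρ j, hρ i', if_pos rfl]
    by_cases hj : j = i'
    · rw [if_pos hj]
    · rw [if_neg hj, div_le_div_iff_of_pos_right hD]
      have key : c j * (1 + c i') ≤ c i' * (1 + c i'') := by
        nlinarith [hc0 j, hi' j, hi'' j hj, hc0 i', hc0 i'']
      nlinarith [mul_le_mul_of_nonneg_left key hM]
  have hmax2 : ∀ j, j ≠ i' → ρ j ≤ ρ i'' := by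
    intro j hj
    rw [hρ j, hρ i'', if_neg hj, if_neg hne]
    rw [div_le_div_iff_of_pos_right hD]
    have key : c j * (1 + c i') ≤ c i'' * (1 + c i') := by
      nlinarith [hi'' j hj, hc0 i']
    nlinarith [mul_le_mul_of_nonneg_left key hM]
  intro i
  by_cases hi : i = i'
  · subst hi
    have hsup : (Finset.univ.erase i).sup' ⟨i'', Finset.mem_erase.mpr ⟨hne, Finset.mem_univ _⟩⟩ ρ = ρ i'' := by
      apply le_antisymm
      · apply Finset.sup'_le
        intro j hj
        exact hmax2 j (Finset.ne_of_mem_erase hj)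
      · exact Finset.le_sup' ρ (Finset.mem_erase.mpr ⟨hne, Finset.mem_univ i''⟩)
    rw [hsup, hρ i, hρ i'', if_pos rfl, if_neg hne]
    field_simp
    ring
  · have hsup : (Finset.univ.erase i).sup' ⟨i', Finset.mem_erase.mpr ⟨fun h => hi h.symm, Finset.mem_univ _⟩⟩ ρ = ρ i' := by
      apply le_antisymm
      · exact Finset.sup'_le _ _ fun j _ => hmax j
      · exact Finset.le_sup' ρ (Finset.mem_erase.mpr ⟨fun h => hi h.symm, Finset.mem_univ i'⟩)
    rw [hsup, hρ i, hρ i', if_pos rfl, if_neg hi]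
    field_simp
    ring
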